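/- Let s > 0, A > 0, h ∈ ℝ and q ∈ ℝ, and suppose q = E[tanh²(√s · Z + h)]. Let α = A · E[sech⁴(√s · Z + h)]. Then | A(1 − q) − (3/2)α | ≤ Λ₀ · A / s^{3/2}, where Λ₀ = (π² − 3)/(6√(2π)). -/

import Mathlib

open MeasureTheory Filter

/-- Standard Gaussian density. -/
noncomputable def stdGauss (z : ℝ) : ℝ := Real.exp (-z ^ 2 / 2) / Real.sqrt (2 * Real.pi)

/-- Gaussian expectation `E[f(h + σ Z)]` for a standard Gaussian `Z`. -/
noncomputable def gexp (f : ℝ → ℝ) (σ h : ℝ) : ℝ := ∫ z, f (h + σ * z) * stdGauss z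

/-- Hyperbolic secant. -/
noncomputable def sech (x : ℝ) : ℝ := 1 / Real.cosh x

/-! ### Auxiliary lemmas -/

lemma sg_sqrt2pi_pos : 0 < Real.sqrt (2 * Real.pi) :=
  Real.sqrt_pos.2 (by positivity)

lemma sg_one_le_sqrt2pi : 1 ≤ Real.sqrt (2 * Real.pi) := by
  rw [show (1:ℝ) = Real.sqrt 1 by simp]
  exact Real.sqrt_le_sqrt (by nlinarith [Real.pi_gt_three])

lemma stdGauss_pos (z : ℝ) : 0 < stdGauss z := by
  unfold stdGauss
  have := sg_sqrt2pi_pos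
  positivity

lemma stdGauss_le_exp (z : ℝ) : stdGauss z ≤ Real.exp (-z ^ 2 / 2) := by
  unfold stdGauss
  rw [div_le_iff₀ sg_sqrt2pi_pos]
  nlinarith [Real.exp_pos (-z ^ 2 / 2), sg_one_le_sqrt2pi]

lemma stdGauss_neg (z : ℝ) : stdGauss (-z) = stdGauss z := by
  unfold stdGauss; rw [neg_pow]; norm_num

lemma sg_continuous_stdGauss : Continuous stdGauss := by
  unfold stdGauss
  exact (Real.continuous_exp.comp (by continuity)).div_const _

lemma sg_hasDerivAt_stdGauss (z : ℝ) : HasDerivAt stdGauss (-z * stdGauss z) z := by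
  have h1 : HasDerivAt (fun z : ℝ => -z ^ 2 / 2) (-z) z := by
    have := ((hasDerivAt_pow 2 z).neg).div_const 2
    refine this.congr_deriv ?_
    push_cast; ring
  have h2 := (h1.exp).div_const (Real.sqrt (2 * Real.pi))
  refine h2.congr_deriv ?_
  unfold stdGauss
  ring

lemma sech_pos (x : ℝ) : 0 < sech x := by
  unfold sech; positivity

lemma sech_le_one (x : ℝ) : sech x ≤ 1 := by
  unfold sech
  rw [div_le_one (Real.cosh_pos x)]
  exact Real.one_le_cosh x

lemma sg_abs_tanh_le_one (x : ℝ) : |Real.tanh x| ≤ 1 := by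
  rw [Real.tanh_eq_sinh_div_cosh, abs_div, abs_of_pos (Real.cosh_pos x),
    div_le_one (Real.cosh_pos x)]
  nlinarith [Real.cosh_sq_sub_sinh_sq x, sq_abs (Real.sinh x), Real.cosh_pos x,
    abs_nonneg (Real.sinh x)]

lemma sg_tanh_sq (x : ℝ) : Real.tanh x ^ 2 = 1 - sech x ^ 2 := by
  have hc := Real.cosh_pos x
  have hid := Real.cosh_sq_sub_sinh_sq x
  rw [Real.tanh_eq_sinh_div_cosh]
  unfold sech
  field_simp
  nlinarith [hid]

lemma sg_hasDerivAt_tanh (x : ℝ) : HasDerivAt Real.tanh (sech x ^ 2) x := by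
  have hc := (Real.cosh_pos x).ne'
  have h := (Real.hasDerivAt_sinh x).div (Real.hasDerivAt_cosh x) hc
  have heq : Real.tanh = fun y => Real.sinh y / Real.cosh y :=
    funext fun y => Real.tanh_eq_sinh_div_cosh y
  rw [heq]
  refine h.congr_deriv ?_
  have hid := Real.cosh_sq_sub_sinh_sq x
  unfold sech
  field_simp
  nlinarith [hid]

lemma sg_hasDerivAt_sech (x : ℝ) : HasDerivAt sech (-(sech x * Real.tanh x)) x := by
  have hc := (Real.cosh_pos x).ne'
  have h := (Real.hasDerivAt_cosh x).inv hc
  have heq : sech = fun y => (Real.cosh y)⁻¹ := funext fun y => by unfold sech; rw [one_div]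
  simp only [heq]
  refine h.congr_deriv ?_
  rw [Real.tanh_eq_sinh_div_cosh]
  field_simp

/-- pointwise domination used everywhere: polynomial × gaussian ≤ C exp(-z²/4) -/
lemma sg_poly_bound (z : ℝ) : (1 + z ^ 2) * Real.exp (-z ^ 2 / 2) ≤ 4 * Real.exp (-(1/4) * z ^ 2) := by
  have h1 : 1 + z ^ 2 / 4 ≤ Real.exp (z ^ 2 / 4) := by
    have := Real.add_one_le_exp (z ^ 2 / 4); linarith
  have h2 : Real.exp (z ^ 2 / 4) * Real.exp (-z ^ 2 / 2) = Real.exp (-(1/4) * z ^ 2) := by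
    rw [← Real.exp_add]; ring_nf
  nlinarith [Real.exp_pos (-z ^ 2 / 2), Real.exp_pos (z ^ 2 / 4), sq_nonneg z]

lemma sg_cubic_bound (z : ℝ) :
    |z ^ 3 - 3 * z| * Real.exp (-z ^ 2 / 2) ≤ 80 * Real.exp (-(1/4) * z ^ 2) := by
  set w := |z| with hw
  have hw0 : 0 ≤ w := abs_nonneg z
  have hw2 : w ^ 2 = z ^ 2 := sq_abs z
  have habs : |z ^ 3 - 3 * z| ≤ w ^ 3 + 3 * w := by
    calc |z ^ 3 - 3 * z| ≤ |z ^ 3| + |3 * z| := abs_sub _ _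
      _ = w ^ 3 + 3 * w := by rw [abs_mul, ← abs_pow]; simp [hw]
  have h1 : 1 + z ^ 2 / 8 ≤ Real.exp (z ^ 2 / 8) := by
    have := Real.add_one_le_exp (z ^ 2 / 8); linarith
  have h2 : Real.exp (z ^ 2 / 8) * Real.exp (z ^ 2 / 8) = Real.exp (z ^ 2 / 4) := by
    rw [← Real.exp_add]; ring_nf
  have h3 : w ^ 3 + 3 * w ≤ 80 * Real.exp (z ^ 2 / 4) := by
    have hq : 1 + z ^ 2 / 4 + z ^ 4 / 64 ≤ Real.exp (z ^ 2 / 4) := by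
      nlinarith [h1, h2, sq_nonneg z]
    nlinarith [hq, hw2, sq_nonneg (w ^ 2 - w), sq_nonneg (w - 1), sq_nonneg w, hw0]
  have h4 : Real.exp (z ^ 2 / 4) * Real.exp (-z ^ 2 / 2) = Real.exp (-(1/4) * z ^ 2) := by
    rw [← Real.exp_add]; ring_nf
  calc |z ^ 3 - 3 * z| * Real.exp (-z ^ 2 / 2)
      ≤ (w ^ 3 + 3 * w) * Real.exp (-z ^ 2 / 2) := by
        apply mul_le_mul_of_nonneg_right habs (Real.exp_pos _).le
    _ ≤ (80 * Real.exp (z ^ 2 / 4)) * Real.exp (-z ^ 2 / 2) := by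
        apply mul_le_mul_of_nonneg_right h3 (Real.exp_pos _).le
    _ = 80 * Real.exp (-(1/4) * z ^ 2) := by rw [mul_assoc, h4]

lemma sg_integrable_exp_quarter : Integrable (fun z : ℝ => Real.exp (-(1/4) * z ^ 2)) := by
  have := integrable_exp_neg_mul_sq (b := (1/4 : ℝ)) (by norm_num)
  exact this.congr (by filter_upwards with z; ring_nf)

lemma sg_integrable_stdGauss : Integrable stdGauss := by
  have h := (integrable_exp_neg_mul_sq (b := (1/2 : ℝ)) (by norm_num)).div_const
    (Real.sqrt (2 * Real.pi))
  exact h.congr (by filter_upwards with z; unfold stdGauss; ring_nf)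

lemma sg_integrable_cubic : Integrable (fun z : ℝ => (z ^ 3 - 3 * z) * stdGauss z) := by
  apply Integrable.mono' (sg_integrable_exp_quarter.const_mul 80)
  · exact (by continuity : Continuous fun z : ℝ => z ^ 3 - 3 * z).aestronglyMeasurable.mul
      sg_continuous_stdGauss.aestronglyMeasurable
  · filter_upwards with z
    rw [Real.norm_eq_abs, abs_mul, abs_of_pos (stdGauss_pos z)]
    calc |z ^ 3 - 3 * z| * stdGauss z ≤ |z ^ 3 - 3 * z| * Real.exp (-z ^ 2 / 2) := by
          apply mul_le_mul_of_nonneg_left (stdGauss_le_exp z) (abs_nonneg _)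
      _ ≤ 80 * Real.exp (-(1/4) * z ^ 2) := sg_cubic_bound z

lemma sg_integrable_cubic' : Integrable (fun z : ℝ => (3 * z - z ^ 3) * stdGauss z) := by
  have := sg_integrable_cubic.neg
  exact this.congr (by filter_upwards with z; simp only [Pi.neg_apply]; ring)

lemma sg_integral_stdGauss : ∫ z, stdGauss z = 1 := by
  have h := integral_gaussian (1/2)
  have h2 : ∫ z : ℝ, Real.exp (-(1/2) * z ^ 2) = Real.sqrt (2 * Real.pi) := by
    rw [h]; congr 1; rw [div_div_eq_mul_div]; ring_nf
  unfold stdGauss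
  rw [integral_div]
  rw [show (fun z : ℝ => Real.exp (-z ^ 2 / 2)) = fun z : ℝ => Real.exp (-(1/2) * z ^ 2) by
    funext z; ring_nf]
  rw [h2, div_self sg_sqrt2pi_pos.ne']

/-- Tendsto of the dominating function. -/
lemma sg_tendsto_quarter_atTop (C : ℝ) :
    Tendsto (fun z : ℝ => C * Real.exp (-(1/4) * z ^ 2)) atTop (nhds 0) := by
  have h2 : Tendsto (fun z : ℝ => z ^ 2) atTop atTop := tendsto_pow_atTop two_ne_zero
  have h3 : Tendsto (fun z : ℝ => -(1/4) * z ^ 2) atTop atBot := by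
    have := (h2.const_mul_atTop (show (0:ℝ) < 1/4 by norm_num))
    have h4 := tendsto_neg_atTop_atBot.comp this
    exact h4.congr fun z => by simp [Function.comp]
  have h5 := Real.tendsto_exp_atBot.comp h3
  have := h5.const_mul C
  simpa using this

lemma sg_tendsto_quarter_atBot (C : ℝ) :
    Tendsto (fun z : ℝ => C * Real.exp (-(1/4) * z ^ 2)) atBot (nhds 0) := by
  have h2 : Tendsto (fun z : ℝ => z ^ 2) atBot atTop := by
    have := (tendsto_pow_atTop (two_ne_zero)).comp tendsto_neg_atBot_atTop (α := ℝ)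
    exact this.congr fun z => by simp [Function.comp]
  have h3 : Tendsto (fun z : ℝ => -(1/4) * z ^ 2) atBot atBot := by
    have := (h2.const_mul_atTop (show (0:ℝ) < 1/4 by norm_num))
    have h4 := tendsto_neg_atTop_atBot.comp this
    exact h4.congr fun z => by simp [Function.comp]
  have h5 := Real.tendsto_exp_atBot.comp h3
  have := h5.const_mul C
  simpa using this


lemma sg_continuous_tanh : Continuous Real.tanh := by
  have heq : Real.tanh = fun y => Real.sinh y / Real.cosh y :=
    funext fun y => Real.tanh_eq_sinh_div_cosh y
  rw [heq]
  exact Real.continuous_sinh.div Real.continuous_cosh fun x => (Real.cosh_pos x).ne'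

lemma sg_continuous_sech : Continuous sech := by
  have heq : sech = fun y => 1 / Real.cosh y := funext fun y => rfl
  rw [heq]
  exact continuous_const.div Real.continuous_cosh fun x => (Real.cosh_pos x).ne'

/-- Derivative of the triple-integration-by-parts witness `W`. -/
lemma sg_hasDerivAt_W (σ h : ℝ) (z : ℝ) :
    HasDerivAt (fun z =>
      (-(2 * σ ^ 2) * (sech (h + σ * z) ^ 2 * Real.tanh (h + σ * z))) * stdGauss z
      + (σ * sech (h + σ * z) ^ 2) * (z * stdGauss z)
      + Real.tanh (h + σ * z) * ((z ^ 2 - 1) * stdGauss z))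
      (4 * σ ^ 3 * ((sech (h + σ * z) ^ 2 - 3 / 2 * sech (h + σ * z) ^ 4) * stdGauss z)
        + Real.tanh (h + σ * z) * ((3 * z - z ^ 3) * stdGauss z)) z := by
  have hx : HasDerivAt (fun z : ℝ => h + σ * z) σ z := by
    simpa using ((hasDerivAt_id z).const_mul σ).const_add h
  have hT : HasDerivAt (fun z : ℝ => Real.tanh (h + σ * z)) (sech (h + σ * z) ^ 2 * σ) z :=
    ((sg_hasDerivAt_tanh (h + σ * z)).comp z hx :)
  have hS : HasDerivAt (fun z : ℝ => sech (h + σ * z))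
      (-(sech (h + σ * z) * Real.tanh (h + σ * z)) * σ) z :=
    ((sg_hasDerivAt_sech (h + σ * z)).comp z hx :)
  have hS2 := hS.pow 2
  have hG := sg_hasDerivAt_stdGauss z
  have hzG : HasDerivAt (fun z : ℝ => z * stdGauss z) (1 * stdGauss z + z * (-z * stdGauss z)) z :=
    (hasDerivAt_id z).mul hG
  have hz2G := ((hasDerivAt_pow 2 z).sub_const 1).mul hG
  have t1 := ((hS2.mul hT).const_mul (-(2 * σ ^ 2))).mul hG
  have t2 := (hS2.const_mul σ).mul hzG
  have t3 := hT.mul hz2G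
  have hsum := (t1.add t2).add t3
  refine hsum.congr_deriv ?_
  have hid := sg_tanh_sq (h + σ * z)
  simp only [Pi.mul_apply, Pi.pow_apply]
  push_cast
  linear_combination (4 * σ ^ 3 * sech (h + σ * z) ^ 2 * stdGauss z) * hid

lemma sg_integrable_D1 (σ h : ℝ) : Integrable (fun z : ℝ =>
    4 * σ ^ 3 * ((sech (h + σ * z) ^ 2 - 3 / 2 * sech (h + σ * z) ^ 4) * stdGauss z)) := by
  have hInt : Integrable (fun z : ℝ =>
      (4 * σ ^ 3 * (sech (h + σ * z) ^ 2 - 3 / 2 * sech (h + σ * z) ^ 4)) * stdGauss z) := by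
    apply sg_integrable_stdGauss.bdd_mul (c := |4 * σ ^ 3| * (5 / 2))
    · exact (continuous_const.mul ((((sg_continuous_sech.comp (by continuity)).pow 2).sub
        (continuous_const.mul ((sg_continuous_sech.comp (by continuity)).pow 4))))).aestronglyMeasurable
    · refine ae_of_all _ fun z => ?_
      have h1 : 0 < sech (h + σ * z) := sech_pos _
      have h2 : sech (h + σ * z) ≤ 1 := sech_le_one _
      have h4 : sech (h + σ * z) ^ 2 ≤ 1 := by nlinarith
      have h5 : sech (h + σ * z) ^ 4 ≤ 1 := by nlinarith
      have h6 : (0:ℝ) < sech (h + σ * z) ^ 2 := by positivity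
      have h7 : (0:ℝ) < sech (h + σ * z) ^ 4 := by positivity
      rw [Real.norm_eq_abs, abs_mul]
      have h8 : |sech (h + σ * z) ^ 2 - 3 / 2 * sech (h + σ * z) ^ 4| ≤ 5 / 2 := by
        rw [abs_le]; constructor <;> nlinarith
      exact mul_le_mul_of_nonneg_left h8 (abs_nonneg _)
  exact hInt.congr (by filter_upwards with z; ring)

lemma sg_integrable_D2 (σ h : ℝ) :
    Integrable (fun z : ℝ => Real.tanh (h + σ * z) * ((3 * z - z ^ 3) * stdGauss z)) := by
  apply sg_integrable_cubic'.bdd_mul (c := 1)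
  · exact (sg_continuous_tanh.comp (by continuity)).aestronglyMeasurable
  · exact ae_of_all _ fun z => by rw [Real.norm_eq_abs]; exact sg_abs_tanh_le_one _

lemma sg_integrable_D2' (σ h : ℝ) :
    Integrable (fun z : ℝ => Real.tanh (h + σ * z) * ((z ^ 3 - 3 * z) * stdGauss z)) := by
  apply sg_integrable_cubic.bdd_mul (c := 1)
  · exact (sg_continuous_tanh.comp (by continuity)).aestronglyMeasurable
  · exact ae_of_all _ fun z => by rw [Real.norm_eq_abs]; exact sg_abs_tanh_le_one _

lemma sg_W_bound (σ h z : ℝ) (hσ : 0 < σ) :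
    ‖(-(2 * σ ^ 2) * (sech (h + σ * z) ^ 2 * Real.tanh (h + σ * z))) * stdGauss z
      + (σ * sech (h + σ * z) ^ 2) * (z * stdGauss z)
      + Real.tanh (h + σ * z) * ((z ^ 2 - 1) * stdGauss z)‖
      ≤ (4 * (2 * σ ^ 2 + σ + 1)) * Real.exp (-(1/4) * z ^ 2) := by
  have hG0 : 0 < stdGauss z := stdGauss_pos z
  have hGe : stdGauss z ≤ Real.exp (-z ^ 2 / 2) := stdGauss_le_exp z
  have hT : |Real.tanh (h + σ * z)| ≤ 1 := sg_abs_tanh_le_one _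
  have hS0 : 0 < sech (h + σ * z) := sech_pos _
  have hS1 : sech (h + σ * z) ≤ 1 := sech_le_one _
  have hS2 : sech (h + σ * z) ^ 2 ≤ 1 := by nlinarith
  have hz1 : |z| ≤ 1 + z ^ 2 := by nlinarith [sq_abs z, abs_nonneg z]
  rw [Real.norm_eq_abs]
  have hct : |sech (h + σ * z) ^ 2 * Real.tanh (h + σ * z)| ≤ 1 := by
    rw [abs_mul, abs_pow, abs_of_pos hS0]
    nlinarith [abs_nonneg (Real.tanh (h + σ * z))]
  have e1 : |(-(2 * σ ^ 2) * (sech (h + σ * z) ^ 2 * Real.tanh (h + σ * z))) * stdGauss z|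
      ≤ 2 * σ ^ 2 * stdGauss z := by
    rw [abs_mul, abs_of_pos hG0, abs_mul, abs_neg,
      abs_of_nonneg (show (0:ℝ) ≤ 2 * σ ^ 2 by positivity)]
    nlinarith [mul_nonneg (mul_nonneg (show (0:ℝ) ≤ 2 * σ ^ 2 by positivity)
      (sub_nonneg.2 hct)) hG0.le]
  have e2 : |(σ * sech (h + σ * z) ^ 2) * (z * stdGauss z)| ≤ σ * (|z| * stdGauss z) := by
    rw [abs_mul, abs_mul, abs_mul, abs_of_pos hσ, abs_of_pos hG0,
      abs_of_nonneg (show (0:ℝ) ≤ sech (h + σ * z) ^ 2 by positivity)]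
    nlinarith [mul_nonneg (mul_nonneg hσ.le (sub_nonneg.2 hS2))
      (mul_nonneg (abs_nonneg z) hG0.le)]
  have e3 : |Real.tanh (h + σ * z) * ((z ^ 2 - 1) * stdGauss z)|
      ≤ (1 + z ^ 2) * stdGauss z := by
    rw [abs_mul, abs_mul, abs_of_pos hG0]
    have h9 : |z ^ 2 - 1| ≤ 1 + z ^ 2 := by
      rw [abs_le]; constructor <;> nlinarith [sq_nonneg z]
    nlinarith [mul_le_mul_of_nonneg_right h9 hG0.le,
      mul_le_mul_of_nonneg_right hT (mul_nonneg (abs_nonneg (z ^ 2 - 1)) hG0.le)]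
  have hsum := abs_add_three
    ((-(2 * σ ^ 2) * (sech (h + σ * z) ^ 2 * Real.tanh (h + σ * z))) * stdGauss z)
    ((σ * sech (h + σ * z) ^ 2) * (z * stdGauss z))
    (Real.tanh (h + σ * z) * ((z ^ 2 - 1) * stdGauss z))
  have key : 2 * σ ^ 2 * stdGauss z + σ * (|z| * stdGauss z) + (1 + z ^ 2) * stdGauss z
      ≤ (2 * σ ^ 2 + σ + 1) * ((1 + z ^ 2) * Real.exp (-z ^ 2 / 2)) := by
    have hb : 2 * σ ^ 2 * stdGauss z + σ * (|z| * stdGauss z) + (1 + z ^ 2) * stdGauss z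
        ≤ (2 * σ ^ 2 + σ + 1) * ((1 + z ^ 2) * stdGauss z) := by
      nlinarith [mul_nonneg (mul_nonneg hσ.le (sub_nonneg.2 hz1)) hG0.le,
        mul_nonneg (mul_nonneg (show (0:ℝ) ≤ 2 * σ ^ 2 by positivity) (sq_nonneg z)) hG0.le]
    have hc : (2 * σ ^ 2 + σ + 1) * ((1 + z ^ 2) * stdGauss z)
        ≤ (2 * σ ^ 2 + σ + 1) * ((1 + z ^ 2) * Real.exp (-z ^ 2 / 2)) := by
      apply mul_le_mul_of_nonneg_left _ (by positivity)
      apply mul_le_mul_of_nonneg_left hGe (by positivity)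
    linarith
  have hpb := sg_poly_bound z
  have : (2 * σ ^ 2 + σ + 1) * ((1 + z ^ 2) * Real.exp (-z ^ 2 / 2))
      ≤ (2 * σ ^ 2 + σ + 1) * (4 * Real.exp (-(1/4) * z ^ 2)) :=
    mul_le_mul_of_nonneg_left hpb (by positivity)
  calc |(-(2 * σ ^ 2) * (sech (h + σ * z) ^ 2 * Real.tanh (h + σ * z))) * stdGauss z
      + (σ * sech (h + σ * z) ^ 2) * (z * stdGauss z)
      + Real.tanh (h + σ * z) * ((z ^ 2 - 1) * stdGauss z)|
      ≤ 2 * σ ^ 2 * stdGauss z + σ * (|z| * stdGauss z) + (1 + z ^ 2) * stdGauss z := by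
        linarith [hsum, e1, e2, e3]
    _ ≤ (2 * σ ^ 2 + σ + 1) * ((1 + z ^ 2) * Real.exp (-z ^ 2 / 2)) := key
    _ ≤ (2 * σ ^ 2 + σ + 1) * (4 * Real.exp (-(1/4) * z ^ 2)) := this
    _ = (4 * (2 * σ ^ 2 + σ + 1)) * Real.exp (-(1/4) * z ^ 2) := by ring

lemma sg_integral_parts (σ h : ℝ) (hσ : 0 < σ) :
    ∫ z, 4 * σ ^ 3 * ((sech (h + σ * z) ^ 2 - 3 / 2 * sech (h + σ * z) ^ 4) * stdGauss z)
      = ∫ z, Real.tanh (h + σ * z) * ((z ^ 3 - 3 * z) * stdGauss z) := by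
  have hD := (sg_integrable_D1 σ h).add (sg_integrable_D2 σ h)
  have htop : Tendsto (fun z =>
      (-(2 * σ ^ 2) * (sech (h + σ * z) ^ 2 * Real.tanh (h + σ * z))) * stdGauss z
      + (σ * sech (h + σ * z) ^ 2) * (z * stdGauss z)
      + Real.tanh (h + σ * z) * ((z ^ 2 - 1) * stdGauss z)) atTop (nhds 0) :=
    squeeze_zero_norm (fun z => sg_W_bound σ h z hσ)
      (sg_tendsto_quarter_atTop (4 * (2 * σ ^ 2 + σ + 1)))
  have hbot : Tendsto (fun z =>
      (-(2 * σ ^ 2) * (sech (h + σ * z) ^ 2 * Real.tanh (h + σ * z))) * stdGauss z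
      + (σ * sech (h + σ * z) ^ 2) * (z * stdGauss z)
      + Real.tanh (h + σ * z) * ((z ^ 2 - 1) * stdGauss z)) atBot (nhds 0) :=
    squeeze_zero_norm (fun z => sg_W_bound σ h z hσ)
      (sg_tendsto_quarter_atBot (4 * (2 * σ ^ 2 + σ + 1)))
  have hzero := integral_of_hasDerivAt_of_tendsto (sg_hasDerivAt_W σ h) hD hbot htop
  rw [sub_zero] at hzero
  have hsplit := integral_add (sg_integrable_D1 σ h) (sg_integrable_D2 σ h)
  rw [hsplit] at hzero
  have hneg : ∫ z, Real.tanh (h + σ * z) * ((3 * z - z ^ 3) * stdGauss z)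
      = - ∫ z, Real.tanh (h + σ * z) * ((z ^ 3 - 3 * z) * stdGauss z) := by
    rw [← integral_neg]
    apply integral_congr_ae
    filter_upwards with z
    ring
  rw [hneg] at hzero
  linarith


lemma sg_hasDerivAt_F (z : ℝ) :
    HasDerivAt (fun z : ℝ => -(z ^ 2 - 1) * stdGauss z) ((z ^ 3 - 3 * z) * stdGauss z) z := by
  have h := (((hasDerivAt_pow 2 z).sub_const 1).neg).mul (sg_hasDerivAt_stdGauss z)
  refine h.congr_deriv ?_
  simp only [Pi.neg_apply]; push_cast; ring

lemma sg_hasDerivAt_G (z : ℝ) :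
    HasDerivAt (fun z : ℝ => (z ^ 2 - 1) * stdGauss z) ((3 * z - z ^ 3) * stdGauss z) z := by
  have h := ((hasDerivAt_pow 2 z).sub_const 1).mul (sg_hasDerivAt_stdGauss z)
  refine h.congr_deriv ?_
  push_cast; ring

lemma sg_quad_bound (z : ℝ) :
    ‖(z ^ 2 - 1) * stdGauss z‖ ≤ 4 * Real.exp (-(1/4) * z ^ 2) := by
  rw [Real.norm_eq_abs, abs_mul, abs_of_pos (stdGauss_pos z)]
  have h9 : |z ^ 2 - 1| ≤ 1 + z ^ 2 := by
    rw [abs_le]; constructor <;> nlinarith [sq_nonneg z]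
  calc |z ^ 2 - 1| * stdGauss z ≤ (1 + z ^ 2) * Real.exp (-z ^ 2 / 2) := by
        apply mul_le_mul h9 (stdGauss_le_exp z) (stdGauss_pos z).le (by positivity)
    _ ≤ 4 * Real.exp (-(1/4) * z ^ 2) := sg_poly_bound z

lemma sg_tendsto_G_atTop :
    Tendsto (fun z : ℝ => (z ^ 2 - 1) * stdGauss z) atTop (nhds 0) :=
  squeeze_zero_norm sg_quad_bound (sg_tendsto_quarter_atTop 4)

lemma sg_tendsto_G_atBot :
    Tendsto (fun z : ℝ => (z ^ 2 - 1) * stdGauss z) atBot (nhds 0) :=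
  squeeze_zero_norm sg_quad_bound (sg_tendsto_quarter_atBot 4)

lemma sg_tendsto_F_atTop :
    Tendsto (fun z : ℝ => -(z ^ 2 - 1) * stdGauss z) atTop (nhds 0) := by
  have := sg_tendsto_G_atTop.neg
  rw [neg_zero] at this
  exact this.congr fun z => by ring

lemma sg_integral_abs_cubic :
    ∫ z, |z ^ 3 - 3 * z| * stdGauss z = 2 * stdGauss 0 + 8 * stdGauss (Real.sqrt 3) := by
  set r := Real.sqrt 3 with hrdef
  have hr0 : 0 < r := Real.sqrt_pos.2 (by norm_num)
  have hr2 : r ^ 2 = 3 := Real.sq_sqrt (by norm_num)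
  have hu : Integrable (fun z : ℝ => |z ^ 3 - 3 * z| * stdGauss z) := by
    apply sg_integrable_cubic.abs.congr
    filter_upwards with z
    rw [abs_mul, abs_of_pos (stdGauss_pos z)]
  -- Piece 1 : (-∞, -r]
  have P1 : ∫ z in Set.Iic (-r), |z ^ 3 - 3 * z| * stdGauss z = 2 * stdGauss r := by
    have hcong : Set.EqOn (fun z : ℝ => |z ^ 3 - 3 * z| * stdGauss z)
        (fun z : ℝ => (3 * z - z ^ 3) * stdGauss z) (Set.Iic (-r)) := by
      intro z hz
      have hz' : z ≤ -r := hz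
      have hzneg : z ^ 3 - 3 * z ≤ 0 := by nlinarith [sq_nonneg (z + r)]
      simp only
      rw [abs_of_nonpos hzneg]; ring
    rw [setIntegral_congr_fun measurableSet_Iic hcong]
    rw [integral_Iic_of_hasDerivAt_of_tendsto' (fun x _ => sg_hasDerivAt_G x)
      sg_integrable_cubic'.integrableOn sg_tendsto_G_atBot]
    rw [stdGauss_neg, neg_sq, hr2]
    ring
  -- Piece 4 : (r, ∞)
  have P4 : ∫ z in Set.Ioi r, |z ^ 3 - 3 * z| * stdGauss z = 2 * stdGauss r := by
    have hcong : Set.EqOn (fun z : ℝ => |z ^ 3 - 3 * z| * stdGauss z)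
        (fun z : ℝ => (z ^ 3 - 3 * z) * stdGauss z) (Set.Ioi r) := by
      intro z hz
      have hz' : r < z := hz
      have hzpos : 0 ≤ z ^ 3 - 3 * z := by nlinarith [sq_nonneg (z - r)]
      simp only
      rw [abs_of_nonneg hzpos]
    rw [setIntegral_congr_fun measurableSet_Ioi hcong]
    rw [integral_Ioi_of_hasDerivAt_of_tendsto' (fun x _ => sg_hasDerivAt_F x)
      sg_integrable_cubic.integrableOn sg_tendsto_F_atTop]
    rw [hr2]
    ring
  -- Piece 2 : (-r, 0]
  have P2 : ∫ z in Set.Ioc (-r) 0, |z ^ 3 - 3 * z| * stdGauss z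
      = stdGauss 0 + 2 * stdGauss r := by
    have hcong : Set.EqOn (fun z : ℝ => |z ^ 3 - 3 * z| * stdGauss z)
        (fun z : ℝ => (z ^ 3 - 3 * z) * stdGauss z) (Set.Ioc (-r) 0) := by
      intro z hz
      have h1 : z ^ 2 ≤ 3 := by nlinarith [hz.1, hz.2]
      have hzpos : 0 ≤ z ^ 3 - 3 * z := by nlinarith [hz.2]
      simp only
      rw [abs_of_nonneg hzpos]
    rw [setIntegral_congr_fun measurableSet_Ioc hcong]
    rw [← intervalIntegral.integral_of_le (by linarith : -r ≤ 0)]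
    rw [intervalIntegral.integral_eq_sub_of_hasDerivAt (fun x _ => sg_hasDerivAt_F x)
      sg_integrable_cubic.intervalIntegrable]
    rw [stdGauss_neg, neg_sq, hr2]
    ring
  -- Piece 3 : (0, r]
  have P3 : ∫ z in Set.Ioc 0 r, |z ^ 3 - 3 * z| * stdGauss z
      = stdGauss 0 + 2 * stdGauss r := by
    have hcong : Set.EqOn (fun z : ℝ => |z ^ 3 - 3 * z| * stdGauss z)
        (fun z : ℝ => (3 * z - z ^ 3) * stdGauss z) (Set.Ioc 0 r) := by
      intro z hz
      have h1 : z ^ 2 ≤ 3 := by nlinarith [hz.1, hz.2]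
      have hzneg : z ^ 3 - 3 * z ≤ 0 := by nlinarith [hz.1]
      simp only
      rw [abs_of_nonpos hzneg]; ring
    rw [setIntegral_congr_fun measurableSet_Ioc hcong]
    rw [← intervalIntegral.integral_of_le (by linarith : (0:ℝ) ≤ r)]
    rw [intervalIntegral.integral_eq_sub_of_hasDerivAt (fun x _ => sg_hasDerivAt_G x)
      sg_integrable_cubic'.intervalIntegrable]
    rw [hr2]
    ring
  -- assemble
  have hsplit1 : ∫ z, |z ^ 3 - 3 * z| * stdGauss z
      = (∫ z in Set.Iic (-r), |z ^ 3 - 3 * z| * stdGauss z)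
        + ∫ z in Set.Ioi (-r), |z ^ 3 - 3 * z| * stdGauss z :=
    (intervalIntegral.integral_Iic_add_Ioi hu.integrableOn hu.integrableOn).symm
  have hd1 : Disjoint (Set.Ioc (-r) r) (Set.Ioi r) := by
    rw [Set.disjoint_left]
    intro x hx hx'
    exact absurd hx.2 (not_le.2 hx')
  have hsplit2 : ∫ z in Set.Ioi (-r), |z ^ 3 - 3 * z| * stdGauss z
      = (∫ z in Set.Ioc (-r) r, |z ^ 3 - 3 * z| * stdGauss z)
        + ∫ z in Set.Ioi r, |z ^ 3 - 3 * z| * stdGauss z := by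
    rw [← setIntegral_union hd1 measurableSet_Ioi hu.integrableOn hu.integrableOn,
      Set.Ioc_union_Ioi_eq_Ioi (by linarith : -r ≤ r)]
  have hd2 : Disjoint (Set.Ioc (-r) 0) (Set.Ioc 0 r) := by
    rw [Set.disjoint_left]
    intro x hx hx'
    exact absurd hx.2 (not_le.2 hx'.1)
  have hsplit3 : ∫ z in Set.Ioc (-r) r, |z ^ 3 - 3 * z| * stdGauss z
      = (∫ z in Set.Ioc (-r) 0, |z ^ 3 - 3 * z| * stdGauss z)
        + ∫ z in Set.Ioc 0 r, |z ^ 3 - 3 * z| * stdGauss z := by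
    rw [← setIntegral_union hd2 measurableSet_Ioc hu.integrableOn hu.integrableOn,
      Set.Ioc_union_Ioc_eq_Ioc (by linarith : -r ≤ 0) (by linarith : (0:ℝ) ≤ r)]
  rw [hsplit1, hsplit2, hsplit3, P1, P2, P3, P4]
  ring

theorem stmt_5 (s A h q : ℝ) (hs : 0 < s) (hA : 0 < A)
    (hq : q = gexp (fun x => Real.tanh x ^ 2) (Real.sqrt s) h)
    (α : ℝ) (hα : α = A * gexp (fun x => sech x ^ 4) (Real.sqrt s) h) :
    |A * (1 - q) - 3 / 2 * α|
      ≤ (Real.pi ^ 2 - 3) / (6 * Real.sqrt (2 * Real.pi)) * A / s ^ ((3 : ℝ) / 2) := by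
  set σ := Real.sqrt s with hσdef
  have hσ : 0 < σ := Real.sqrt_pos.2 hs
  set J := ∫ z, Real.tanh (h + σ * z) * ((z ^ 3 - 3 * z) * stdGauss z) with hJdef
  -- integrability facts
  have Iq : Integrable (fun z : ℝ => Real.tanh (h + σ * z) ^ 2 * stdGauss z) := by
    apply sg_integrable_stdGauss.bdd_mul (c := 1)
    · exact ((sg_continuous_tanh.comp (by continuity)).pow 2).aestronglyMeasurable
    · refine ae_of_all _ fun z => ?_
      rw [Real.norm_eq_abs, abs_pow]
      have := sg_abs_tanh_le_one (h + σ * z)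
      nlinarith [abs_nonneg (Real.tanh (h + σ * z))]
  have Is2 : Integrable (fun z : ℝ => sech (h + σ * z) ^ 2 * stdGauss z) := by
    apply sg_integrable_stdGauss.bdd_mul (c := 1)
    · exact ((sg_continuous_sech.comp (by continuity)).pow 2).aestronglyMeasurable
    · refine ae_of_all _ fun z => ?_
      rw [Real.norm_eq_abs, abs_pow, abs_of_pos (sech_pos _)]
      have h1 := sech_pos (h + σ * z); have h2 := sech_le_one (h + σ * z)
      nlinarith
  have Is4 : Integrable (fun z : ℝ => sech (h + σ * z) ^ 4 * stdGauss z) := by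
    apply sg_integrable_stdGauss.bdd_mul (c := 1)
    · exact ((sg_continuous_sech.comp (by continuity)).pow 4).aestronglyMeasurable
    · refine ae_of_all _ fun z => ?_
      rw [Real.norm_eq_abs, abs_pow, abs_of_pos (sech_pos _)]
      exact pow_le_one₀ (sech_pos _).le (sech_le_one _)
  -- 1 - q as an integral
  have hq' : (1:ℝ) - q = ∫ z, sech (h + σ * z) ^ 2 * stdGauss z := by
    have h1 : q = ∫ z, Real.tanh (h + σ * z) ^ 2 * stdGauss z := by
      rw [hq]; simp only [gexp]
    rw [h1, ← sg_integral_stdGauss, ← integral_sub sg_integrable_stdGauss Iq]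
    apply integral_congr_ae
    filter_upwards with z
    have hid := sg_tanh_sq (h + σ * z)
    linear_combination (-stdGauss z) * hid
  have hα' : α = A * ∫ z, sech (h + σ * z) ^ 4 * stdGauss z := by
    rw [hα]; simp only [gexp]
  -- the main identity
  have key0 : ∫ z, (sech (h + σ * z) ^ 2 - 3 / 2 * sech (h + σ * z) ^ 4) * stdGauss z
      = J / (4 * σ ^ 3) := by
    have hp := sg_integral_parts σ h hσ
    rw [integral_const_mul] at hp
    rw [eq_div_iff (by positivity : (4:ℝ) * σ ^ 3 ≠ 0)]
    rw [hJdef, ← hp]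
    ring
  have elin : ∫ z, (sech (h + σ * z) ^ 2 - 3 / 2 * sech (h + σ * z) ^ 4) * stdGauss z
      = (∫ z, sech (h + σ * z) ^ 2 * stdGauss z)
        - 3 / 2 * ∫ z, sech (h + σ * z) ^ 4 * stdGauss z := by
    rw [show (fun z : ℝ => (sech (h + σ * z) ^ 2 - 3 / 2 * sech (h + σ * z) ^ 4) * stdGauss z)
      = fun z : ℝ => sech (h + σ * z) ^ 2 * stdGauss z
        - (3 / 2) * (sech (h + σ * z) ^ 4 * stdGauss z) from funext fun z => by ring]
    rw [integral_sub Is2 (Is4.const_mul (3 / 2)), integral_const_mul]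
  have hmain : A * (1 - q) - 3 / 2 * α = A * (J / (4 * σ ^ 3)) := by
    rw [hq', hα', ← key0, elin]
    ring
  -- bound |J|
  have hu : Integrable (fun z : ℝ => |z ^ 3 - 3 * z| * stdGauss z) := by
    apply sg_integrable_cubic.abs.congr
    filter_upwards with z
    rw [abs_mul, abs_of_pos (stdGauss_pos z)]
  have hJ : |J| ≤ 2 * stdGauss 0 + 8 * stdGauss (Real.sqrt 3) := by
    have step1 : |J| ≤ ∫ z, |Real.tanh (h + σ * z) * ((z ^ 3 - 3 * z) * stdGauss z)| := by
      rw [hJdef, ← Real.norm_eq_abs]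
      refine (norm_integral_le_integral_norm _).trans (le_of_eq ?_)
      apply integral_congr_ae
      filter_upwards with z
      rw [Real.norm_eq_abs]
    have step2 : ∫ z, |Real.tanh (h + σ * z) * ((z ^ 3 - 3 * z) * stdGauss z)|
        ≤ ∫ z, |z ^ 3 - 3 * z| * stdGauss z := by
      apply integral_mono (sg_integrable_D2' σ h).abs hu
      intro z
      simp only
      rw [abs_mul, abs_mul, abs_of_pos (stdGauss_pos z)]
      have h1 := sg_abs_tanh_le_one (h + σ * z)
      nlinarith [abs_nonneg (z ^ 3 - 3 * z), mul_nonneg (abs_nonneg (z ^ 3 - 3 * z))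
        (stdGauss_pos z).le]
    calc |J| ≤ _ := step1
      _ ≤ _ := step2
      _ = 2 * stdGauss 0 + 8 * stdGauss (Real.sqrt 3) := sg_integral_abs_cubic
  -- numerics
  have hφ0 : stdGauss 0 = 1 / Real.sqrt (2 * Real.pi) := by
    unfold stdGauss; norm_num
  have hφr : stdGauss (Real.sqrt 3) = Real.exp (-(3 / 2)) / Real.sqrt (2 * Real.pi) := by
    unfold stdGauss
    rw [Real.sq_sqrt (by norm_num : (0:ℝ) ≤ 3)]
    norm_num
  have hE : Real.exp (-(3 / 2)) ≤ 1 / 4 := by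
    rw [show (-(3/2) : ℝ) = -(1 + 1/2) by norm_num, Real.exp_neg, Real.exp_add]
    have h1 : (2.7:ℝ) ≤ Real.exp 1 := by nlinarith [Real.exp_one_gt_d9]
    have h2 : (1.5:ℝ) ≤ Real.exp (1/2) := by nlinarith [Real.add_one_le_exp (1/2 : ℝ)]
    have h3 : (4:ℝ) ≤ Real.exp 1 * Real.exp (1/2) := by nlinarith [Real.exp_pos 1]
    rw [show (1/4 : ℝ) = 4⁻¹ by norm_num]
    exact inv_anti₀ (by norm_num) h3
  have hs32 : s ^ ((3:ℝ)/2) = σ ^ 3 := by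
    rw [show ((3:ℝ)/2) = (1/2) * 3 by norm_num, Real.rpow_mul hs.le,
      show ((3:ℝ)) = ((3:ℕ):ℝ) from by norm_num, Real.rpow_natCast]
    congr 1
    rw [hσdef, Real.sqrt_eq_rpow]
  -- final chain
  set c := Real.sqrt (2 * Real.pi) with hcdef
  have hc0 : 0 < c := sg_sqrt2pi_pos
  have hπ := Real.pi_gt_d6
  have hnum : (2 + 8 * Real.exp (-(3/2))) / 4 ≤ (Real.pi ^ 2 - 3) / 6 := by
    nlinarith [hE, hπ, Real.exp_pos (-(3/2 : ℝ))]
  rw [hmain, hs32]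
  have habs : |A * (J / (4 * σ ^ 3))| = A * |J| / (4 * σ ^ 3) := by
    rw [abs_mul, abs_of_pos hA, abs_div, abs_of_pos (by positivity : (0:ℝ) < 4 * σ ^ 3),
      mul_div_assoc]
  rw [habs]
  have hstep : A * |J| / (4 * σ ^ 3) ≤ A * (2 * stdGauss 0 + 8 * stdGauss (Real.sqrt 3))
      / (4 * σ ^ 3) := by
    apply div_le_div_of_nonneg_right ?_ (by positivity)
    exact mul_le_mul_of_nonneg_left hJ hA.le
  refine hstep.trans ?_
  rw [hφ0, hφr]
  have lhs_eq : A * (2 * (1 / c) + 8 * (Real.exp (-(3/2)) / c)) / (4 * σ ^ 3)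
      = ((2 + 8 * Real.exp (-(3/2))) / 4) * (A / (c * σ ^ 3)) := by
    field_simp
  have rhs_eq : (Real.pi ^ 2 - 3) / (6 * c) * A / σ ^ 3
      = ((Real.pi ^ 2 - 3) / 6) * (A / (c * σ ^ 3)) := by
    rw [div_mul_eq_mul_div, div_div, div_mul_div_comm]
    ring_nf
  rw [lhs_eq, rhs_eq]
  exact mul_le_mul_of_nonneg_right hnum (by positivity)
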